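/- For every M > 0 and ε > 0 there exists δ > 0 such that for all continuous q₁, q₂ : [0,2π] → ℝ with sup|q₁| ≤ M, sup|q₂| ≤ M and ∫₀^{2π} |q₁(t) − q₂(t)| dt ≤ δ, one has ‖Φ_{q₁}(2π) − Φ_{q₂}(2π)‖ ≤ ε. (The matrix-level monodromy map is uniformly continuous with respect to the L¹ norm on sup-norm-bounded sets of potentials.) -/

import Mathlib

open Real Set Matrix

attribute [local instance] Matrix.normedAddCommGroup Matrix.normedSpace


lemma aux_mul_norm (A X : Matrix (Fin 2) (Fin 2) ℝ) : ‖A * X‖ ≤ 2 * ‖A‖ * ‖X‖ := by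
  rw [Matrix.norm_le_iff (by positivity)]
  intro i j
  rw [Matrix.mul_apply, Fin.sum_univ_two]
  calc ‖A i 0 * X 0 j + A i 1 * X 1 j‖
      ≤ ‖A i 0‖ * ‖X 0 j‖ + ‖A i 1‖ * ‖X 1 j‖ := by
        refine (norm_add_le _ _).trans ?_
        simp [abs_mul]
    _ ≤ ‖A‖ * ‖X‖ + ‖A‖ * ‖X‖ := by
        gcongr <;> exact Matrix.norm_entry_le_entrywise_sup_norm _
    _ = 2 * ‖A‖ * ‖X‖ := by ring

lemma aux_coef_norm (q : ℝ) : ‖!![(0:ℝ), 1; q, 0]‖ ≤ 1 + |q| := by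
  rw [Matrix.norm_le_iff (by positivity)]
  intro i j
  fin_cases i <;> fin_cases j <;>
    simp [abs_le, abs_nonneg, le_add_of_nonneg_left, abs_nonneg q] <;>
    [skip; skip] <;> nlinarith [abs_nonneg q]

lemma aux_coef_sub (a c : ℝ) : !![(0:ℝ), 1; a, 0] - !![(0:ℝ), 1; c, 0] = !![0, 0; a - c, 0] := by
  ext i j
  fin_cases i <;> fin_cases j <;> simp

lemma aux_coef2_norm (c : ℝ) : ‖!![(0:ℝ), 0; c, 0]‖ ≤ |c| := by
  rw [Matrix.norm_le_iff (abs_nonneg c)]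
  intro i j
  fin_cases i <;> fin_cases j <;> simp

lemma aux_one_norm : ‖(1 : Matrix (Fin 2) (Fin 2) ℝ)‖ ≤ 1 := by
  rw [Matrix.norm_le_iff zero_le_one]
  intro i j
  fin_cases i <;> fin_cases j <;> simp [Matrix.one_apply]

/-- Proposition 2.1, last claim. The matrix-level monodromy is
uniformly continuous, with respect to the `L¹` norm, on sup-norm-bounded sets of
potentials on `[0,2π]`. -/
theorem stmt_5 (M : ℝ) (hM : 0 < M) (ε : ℝ) (hε : 0 < ε) :
    ∃ δ : ℝ, 0 < δ ∧
      ∀ q₁ q₂ : ℝ → ℝ,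
        ContinuousOn q₁ (Icc 0 (2 * π)) → ContinuousOn q₂ (Icc 0 (2 * π)) →
        (∀ t ∈ Icc (0:ℝ) (2 * π), |q₁ t| ≤ M) →
        (∀ t ∈ Icc (0:ℝ) (2 * π), |q₂ t| ≤ M) →
        (∫ t in (0:ℝ)..(2 * π), |q₁ t - q₂ t|) ≤ δ →
        -- `Φ₁`, `Φ₂` the fundamental matrices of `q₁`, `q₂` on `[0,2π]`:
        ∀ Φ₁ Φ₂ : ℝ → Matrix (Fin 2) (Fin 2) ℝ,
          Φ₁ 0 = 1 →
          (∀ t ∈ Icc (0:ℝ) (2 * π), ∀ i j, HasDerivWithinAt (fun s => Φ₁ s i j)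
            ((!![0, 1; q₁ t, 0] * Φ₁ t) i j) (Icc 0 (2 * π)) t) →
          Φ₂ 0 = 1 →
          (∀ t ∈ Icc (0:ℝ) (2 * π), ∀ i j, HasDerivWithinAt (fun s => Φ₂ s i j)
            ((!![0, 1; q₂ t, 0] * Φ₂ t) i j) (Icc 0 (2 * π)) t) →
          ‖Φ₁ (2 * π) - Φ₂ (2 * π)‖ ≤ ε := by
  have hb : (0:ℝ) < 2 * π := by positivity
  set b : ℝ := 2 * π with hbdef
  set K : ℝ := 2 * (M + 1) with hKdef
  have hK0 : 0 < K := by positivity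
  set C : ℝ := Real.exp (K * b) with hCdef
  have hC1 : 1 ≤ C := Real.one_le_exp (by positivity)
  have hC0 : 0 < C := lt_of_lt_of_le one_pos hC1
  refine ⟨ε / (4 * C * C), by positivity, ?_⟩
  intro q₁ q₂ hq₁c hq₂c hq₁M hq₂M hL1 Φ₁ Φ₂ hΦ₁0 hΦ₁d hΦ₂0 hΦ₂d
  set A₁ : ℝ → Matrix (Fin 2) (Fin 2) ℝ := fun t => !![0, 1; q₁ t, 0] with hA₁
  set A₂ : ℝ → Matrix (Fin 2) (Fin 2) ℝ := fun t => !![0, 1; q₂ t, 0] with hA₂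
  -- matrix-valued derivatives
  have hd₁ : ∀ t ∈ Icc (0:ℝ) b, HasDerivWithinAt Φ₁ (A₁ t * Φ₁ t) (Icc 0 b) t := by
    intro t ht
    exact hasDerivWithinAt_pi.2 fun i => hasDerivWithinAt_pi.2 fun j => hΦ₁d t ht i j
  have hd₂ : ∀ t ∈ Icc (0:ℝ) b, HasDerivWithinAt Φ₂ (A₂ t * Φ₂ t) (Icc 0 b) t := by
    intro t ht
    exact hasDerivWithinAt_pi.2 fun i => hasDerivWithinAt_pi.2 fun j => hΦ₂d t ht i j
  have hd₁' : ∀ t ∈ Ico (0:ℝ) b, HasDerivWithinAt Φ₁ (A₁ t * Φ₁ t) (Ici t) t := fun t ht =>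
    (hd₁ t (Ico_subset_Icc_self ht)).mono_of_mem_nhdsWithin (Icc_mem_nhdsGE_of_mem ht)
  have hd₂' : ∀ t ∈ Ico (0:ℝ) b, HasDerivWithinAt Φ₂ (A₂ t * Φ₂ t) (Ici t) t := fun t ht =>
    (hd₂ t (Ico_subset_Icc_self ht)).mono_of_mem_nhdsWithin (Icc_mem_nhdsGE_of_mem ht)
  have hc₁ : ContinuousOn Φ₁ (Icc 0 b) := fun t ht => (hd₁ t ht).continuousWithinAt
  have hc₂ : ContinuousOn Φ₂ (Icc 0 b) := fun t ht => (hd₂ t ht).continuousWithinAt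
  -- bound on ‖Φ₂‖
  have hΦ₂b : ∀ t ∈ Icc (0:ℝ) b, ‖Φ₂ t‖ ≤ C := by
    intro t ht
    have := norm_le_gronwallBound_of_norm_deriv_right_le (f := Φ₂)
      (f' := fun t => A₂ t * Φ₂ t) (δ := 1) (K := K) (ε := 0) (a := 0) (b := b)
      hc₂ hd₂' (by rw [hΦ₂0]; exact aux_one_norm) ?_ t ht
    · rw [gronwallBound_ε0, sub_zero, one_mul] at this
      exact this.trans (Real.exp_le_exp.2 (by nlinarith [ht.1, ht.2, hK0]))
    · intro x hx
      rw [add_zero]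
      calc ‖A₂ x * Φ₂ x‖ ≤ 2 * ‖A₂ x‖ * ‖Φ₂ x‖ := aux_mul_norm _ _
        _ ≤ K * ‖Φ₂ x‖ := by
            have h1 : ‖A₂ x‖ ≤ 1 + |q₂ x| := aux_coef_norm _
            have h2 : |q₂ x| ≤ M := hq₂M x (Ico_subset_Icc_self hx)
            nlinarith [norm_nonneg (Φ₂ x), norm_nonneg (A₂ x)]
  -- the perturbation term
  set proj : ℝ → ℝ := fun s => max 0 (min s b) with hproj
  have hprojc : Continuous proj := continuous_const.max (continuous_id.min continuous_const)
  have hprojm : ∀ s, proj s ∈ Icc (0:ℝ) b := fun s =>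
    ⟨le_max_left _ _, max_le hb.le (min_le_right _ _)⟩
  have hprojid : ∀ s ∈ Icc (0:ℝ) b, proj s = s := fun s hs => by
    simp [hproj, min_eq_left hs.2, max_eq_right hs.1]
  set p : ℝ → ℝ := fun s => 2 * C * |q₁ (proj s) - q₂ (proj s)| with hp
  have hpc : Continuous p := by
    have h1 : Continuous fun s => q₁ (proj s) :=
      hq₁c.comp_continuous hprojc hprojm
    have h2 : Continuous fun s => q₂ (proj s) :=
      hq₂c.comp_continuous hprojc hprojm
    exact continuous_const.mul (h1.sub h2).abs
  have hp0 : ∀ s, 0 ≤ p s := fun s => by positivity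
  set G : ℝ → ℝ := fun t => ∫ s in (0:ℝ)..t, p s with hG
  have hGd : ∀ t, HasDerivAt G (p t) t := fun t =>
    (hpc.integral_hasStrictDerivAt 0 t).hasDerivAt
  set η : ℝ := ε / (2 * C * (1 + b)) with hη
  have hη0 : 0 < η := by positivity
  set B : ℝ → ℝ := fun t => Real.exp (K * t) * (η * (1 + t) + G t) with hB
  set B' : ℝ → ℝ := fun t =>
    K * Real.exp (K * t) * (η * (1 + t) + G t) + Real.exp (K * t) * (η + p t) with hB'
  have hBd : ∀ x, HasDerivAt B (B' x) x := by
    intro x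
    have hexp : HasDerivAt (fun t => Real.exp (K * t)) (K * Real.exp (K * x)) x := by
      simpa [mul_comm] using ((hasDerivAt_id x).const_mul K).exp
    have hlin : HasDerivAt (fun t => η * (1 + t) + G t) (η + p x) x := by
      have : HasDerivAt (fun t : ℝ => η * (1 + t)) (η * 1) x :=
        ((hasDerivAt_id x).const_add (1:ℝ)).const_mul η
      have h := this.add (hGd x)
      rw [mul_one] at h
      exact h
    exact hexp.mul hlin
  -- the fencing argument
  have key : ∀ ⦃x⦄, x ∈ Icc (0:ℝ) b → ‖Φ₁ x - Φ₂ x‖ ≤ B x := by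
    refine image_norm_le_of_norm_deriv_right_lt_deriv_boundary
      (f := fun t => Φ₁ t - Φ₂ t) (f' := fun t => A₁ t * Φ₁ t - A₂ t * Φ₂ t)
      (hc₁.sub hc₂) (fun t ht => (hd₁' t ht).sub (hd₂' t ht)) ?_ hBd ?_
    · show ‖Φ₁ 0 - Φ₂ 0‖ ≤ B 0
      rw [hΦ₁0, hΦ₂0, sub_self, norm_zero]
      simp only [hB, mul_zero, Real.exp_zero, one_mul]
      have hG00 : G 0 = 0 := intervalIntegral.integral_same
      rw [hG00]
      positivity
    · intro x hx hfB
      have hxI : x ∈ Icc (0:ℝ) b := Ico_subset_Icc_self hx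
      have hsplit : A₁ x * Φ₁ x - A₂ x * Φ₂ x
          = A₁ x * (Φ₁ x - Φ₂ x) + (A₁ x - A₂ x) * Φ₂ x := by
        rw [Matrix.mul_sub, Matrix.sub_mul]; abel
      have h1 : ‖A₁ x * (Φ₁ x - Φ₂ x)‖ ≤ K * ‖Φ₁ x - Φ₂ x‖ := by
        have := aux_mul_norm (A₁ x) (Φ₁ x - Φ₂ x)
        have hA : ‖A₁ x‖ ≤ 1 + |q₁ x| := aux_coef_norm _
        have hq : |q₁ x| ≤ M := hq₁M x hxI
        nlinarith [norm_nonneg (Φ₁ x - Φ₂ x), norm_nonneg (A₁ x)]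
      have h2 : ‖(A₁ x - A₂ x) * Φ₂ x‖ ≤ p x := by
        have hsub : A₁ x - A₂ x = !![0, 0; q₁ x - q₂ x, 0] := aux_coef_sub _ _
        have := aux_mul_norm (A₁ x - A₂ x) (Φ₂ x)
        have hA : ‖A₁ x - A₂ x‖ ≤ |q₁ x - q₂ x| := by rw [hsub]; exact aux_coef2_norm _
        have hΦ : ‖Φ₂ x‖ ≤ C := hΦ₂b x hxI
        have hpx : p x = 2 * C * |q₁ x - q₂ x| := by simp only [hp]; rw [hprojid x hxI]
        rw [hpx]
        nlinarith [norm_nonneg (Φ₂ x), norm_nonneg (A₁ x - A₂ x), abs_nonneg (q₁ x - q₂ x)]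
      calc ‖A₁ x * Φ₁ x - A₂ x * Φ₂ x‖
          ≤ K * ‖Φ₁ x - Φ₂ x‖ + p x := by
            rw [hsplit]
            exact (norm_add_le _ _).trans (add_le_add h1 h2)
        _ = K * B x + p x := by rw [hfB]
        _ < B' x := by
            simp only [hB', hB]
            have hexp1 : 1 ≤ Real.exp (K * x) := Real.one_le_exp (by nlinarith [hx.1])
            nlinarith [hp0 x, hη0, hexp1]
  -- conclude
  have hfinal := key (right_mem_Icc.2 hb.le)
  refine hfinal.trans ?_
  have hGb : G b ≤ 2 * C * (ε / (4 * C * C)) := by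
    have hcongr : G b = 2 * C * ∫ t in (0:ℝ)..b, |q₁ t - q₂ t| := by
      show (∫ s in (0:ℝ)..b, p s) = _
      rw [show (∫ s in (0:ℝ)..b, p s) = ∫ s in (0:ℝ)..b, 2 * C * |q₁ s - q₂ s| from
        intervalIntegral.integral_congr fun s hs => by
          simp only [hp]
          rw [hprojid s (by rwa [uIcc_of_le hb.le] at hs)]]
      exact intervalIntegral.integral_const_mul _ _
    rw [hcongr]
    have : (0:ℝ) ≤ 2 * C := by positivity
    exact mul_le_mul_of_nonneg_left hL1 this
  show Real.exp (K * b) * (η * (1 + b) + G b) ≤ ε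
  calc Real.exp (K * b) * (η * (1 + b) + G b)
      ≤ C * (η * (1 + b) + 2 * C * (ε / (4 * C * C))) := by
        rw [← hCdef]
        have : 0 ≤ η * (1 + b) := by positivity
        nlinarith [hGb, hC0]
    _ = ε / 2 + ε / 2 := by
        simp only [hη]
        field_simp
        ring
    _ = ε := by ring
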